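/- arXiv:2211.17040 — 2 statements merged into one kernel-verified Lean document; each statement's English description precedes it below -/
import Mathlib

section
/- Let n ≥ 2 and let κ₁ ≤ κ₂ ≤ ... ≤ κₙ be real numbers with H = κ₁ + ... + κₙ > 0. If H − n κ₁ ≤ n H ω for some ω ≥ 0, then the squared norm of the traceless part satisfies |Å|² := Σᵢ κᵢ² − H²/n ≤ C(n) H² ω², where C(n) is a constant depending only on n (one may take C(n) = n(n−1)²). -/
open Finset

/-- If `H − nκ₁ ≤ nHω` for ordered principal curvatures with `H > 0`, then the
traceless second fundamental form satisfies `|Å|² ≤ n(n−1)² H² ω²`. -/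
theorem traceless_bound (n : ℕ) (hn : 2 ≤ n) (κ : Fin n → ℝ)
    (hmono : Monotone κ) (ω : ℝ) (hω : 0 ≤ ω)
    (hH : 0 < ∑ i, κ i)
    (hpinch : (∑ i, κ i) - n * κ ⟨0, by omega⟩ ≤ n * (∑ i, κ i) * ω) :
    (∑ i, (κ i) ^ 2) - (∑ i, κ i) ^ 2 / n ≤
      n * ((n : ℝ) - 1) ^ 2 * (∑ i, κ i) ^ 2 * ω ^ 2 := by
  set H := ∑ i, κ i with hHdef
  set κ0 := κ ⟨0, by omega⟩ with hκ0
  have hnR : (2:ℝ) ≤ (n:ℝ) := by exact_mod_cast hn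
  have hnpos : (0:ℝ) < n := by linarith
  have h0le : ∀ i, κ0 ≤ κ i := fun i => hmono (by simp [Fin.le_def])
  have hS : ∑ i, (κ i - κ0) = H - n * κ0 := by
    rw [Finset.sum_sub_distrib, Finset.sum_const, Finset.card_univ, Fintype.card_fin,
      nsmul_eq_mul, hHdef]
  have hSnn : 0 ≤ H - n * κ0 := by
    rw [← hS]; exact Finset.sum_nonneg fun i _ => sub_nonneg.2 (h0le i)
  have hsq : ∑ i, (κ i - κ0) ^ 2 ≤ (H - n * κ0) ^ 2 := by
    rw [← hS]
    exact Finset.sum_sq_le_sq_sum_of_nonneg fun i _ => sub_nonneg.2 (h0le i)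
  have hexp : ∑ i, (κ i - κ0) ^ 2 = (∑ i, (κ i) ^ 2) - 2 * κ0 * H + n * κ0 ^ 2 := by
    have : ∀ i : Fin n, (κ i - κ0) ^ 2 = (κ i) ^ 2 - 2 * κ0 * κ i + κ0 ^ 2 := by
      intro i; ring
    simp only [this, Finset.sum_add_distrib, Finset.sum_sub_distrib, Finset.sum_const,
      Finset.card_univ, Fintype.card_fin, nsmul_eq_mul, ← Finset.mul_sum, ← hHdef]
  have hS2 : (H - n * κ0) ^ 2 ≤ (n * H * ω) ^ 2 := by
    have := pow_le_pow_left₀ hSnn hpinch 2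
    simpa using this
  have hT : (∑ i, (κ i) ^ 2) - 2 * κ0 * H + n * κ0 ^ 2 ≤ (n * H * ω) ^ 2 := by
    rw [← hexp]; exact hsq.trans hS2
  have hrw : (∑ i, (κ i) ^ 2) - H ^ 2 / n = ((∑ i, (κ i) ^ 2) * n - H ^ 2) / n := by
    field_simp
  rw [hrw, div_le_iff₀ hnpos]
  nlinarith [hS2, sq_nonneg (n * H * ω), sq_nonneg (H * ω),
    mul_nonneg (mul_nonneg (by linarith : (0:ℝ) ≤ (n:ℝ) - 1) (by linarith : (0:ℝ) ≤ (n:ℝ) - 2)) (sq_nonneg (n * H * ω)),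
    mul_le_mul_of_nonneg_left hS2 (by linarith : (0:ℝ) ≤ (n:ℝ) - 1)]
end

section
/- Let f : Γ₊ → (0, ∞) be a symmetric function on the positive cone that is positively homogeneous of degree 1 and convex, strictly increasing in each argument, with f(1,...,1) = n. Then the dual function f̃(κ₁,...,κₙ) = 1/f(κ₁^{-1}, ..., κₙ^{-1}) is concave on Γ₊, i.e., f is inverse concave. -/
/-- Pointwise convexity trick for inverses. -/
lemma inv_add_le_aux (p q l : ℝ) (hp : 0 < p) (hq : 0 < q) :
    (p + q)⁻¹ ≤ l ^ 2 / p + (1 - l) ^ 2 / q := by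
  have key : l ^ 2 / p + (1 - l) ^ 2 / q - (p + q)⁻¹
      = (l * q - (1 - l) * p) ^ 2 / (p * q * (p + q)) := by
    field_simp
    ring
  nlinarith [sq_nonneg (l * q - (1 - l) * p), div_nonneg (sq_nonneg (l * q - (1 - l) * p))
    (le_of_lt (by positivity : (0:ℝ) < p * q * (p + q))), key]

/-- A convex, 1-homogeneous, strictly monotone, normalized symmetric curvature
function on the positive cone is inverse concave: the dual function
`f̃(κ) = 1/f(κ⁻¹)` is concave on the positive cone. -/
theorem convex_implies_inverse_concave (n : ℕ) (hn : 2 ≤ n)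
    (f : (Fin n → ℝ) → ℝ)
    (Γpos : Set (Fin n → ℝ)) (hΓ : Γpos = {κ : Fin n → ℝ | ∀ i, 0 < κ i})
    (hsymm : ∀ (σ : Equiv.Perm (Fin n)) (κ : Fin n → ℝ), κ ∈ Γpos → f (κ ∘ σ) = f κ)
    (hpos : ∀ κ ∈ Γpos, 0 < f κ)
    (hhom : ∀ (c : ℝ), 0 < c → ∀ κ ∈ Γpos, f (c • κ) = c * f κ)
    (hconv : ConvexOn ℝ Γpos f)
    (hmono : ∀ κ μ, κ ∈ Γpos → μ ∈ Γpos → (∀ i, κ i ≤ μ i) → κ ≠ μ → f κ < f μ)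
    (hnorm : f (fun _ => 1) = n) :
    ConcaveOn ℝ Γpos (fun κ => (f (fun i => (κ i)⁻¹))⁻¹) := by
  subst hΓ
  have hΓconv : Convex ℝ {κ : Fin n → ℝ | ∀ i, 0 < κ i} := by
    intro x hx y hy a b ha hb hab i
    simp only [Pi.add_apply, Pi.smul_apply, smul_eq_mul]
    rcases lt_or_eq_of_le ha with ha' | ha'
    · have : 0 ≤ b * y i := mul_nonneg hb (le_of_lt (hy i))
      nlinarith [hx i]
    · have hb1 : b = 1 := by linarith
      simp [← ha', hb1, hy i]
  -- nonstrict monotonicity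
  have hmono' : ∀ κ μ, κ ∈ {κ : Fin n → ℝ | ∀ i, 0 < κ i} →
      μ ∈ {κ : Fin n → ℝ | ∀ i, 0 < κ i} → (∀ i, κ i ≤ μ i) → f κ ≤ f μ := by
    intro κ μ hκ hμ hle
    by_cases h : κ = μ
    · rw [h]
    · exact le_of_lt (hmono κ μ hκ hμ hle h)
  -- subadditivity
  have hsub : ∀ x y, x ∈ {κ : Fin n → ℝ | ∀ i, 0 < κ i} →
      y ∈ {κ : Fin n → ℝ | ∀ i, 0 < κ i} → f (x + y) ≤ f x + f y := by
    intro x y hx hy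
    have hmem : (1/2 : ℝ) • x + (1/2 : ℝ) • y ∈ {κ : Fin n → ℝ | ∀ i, 0 < κ i} :=
      hΓconv hx hy (by norm_num) (by norm_num) (by norm_num)
    have h1 : f ((1/2 : ℝ) • x + (1/2 : ℝ) • y) ≤ (1/2) * f x + (1/2) * f y :=
      hconv.2 hx hy (by norm_num) (by norm_num) (by norm_num)
    have h2 : f ((2 : ℝ) • ((1/2 : ℝ) • x + (1/2 : ℝ) • y)) =
        2 * f ((1/2 : ℝ) • x + (1/2 : ℝ) • y) := hhom 2 (by norm_num) _ hmem
    have h3 : (2 : ℝ) • ((1/2 : ℝ) • x + (1/2 : ℝ) • y) = x + y := by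
      ext i; simp; ring
    rw [h3] at h2
    linarith
  constructor
  · exact hΓconv
  · intro x hx y hy a b ha hb hab
    simp only [smul_eq_mul]
    rcases eq_or_lt_of_le ha with ha' | ha'
    · have hb1 : b = 1 := by linarith
      have : a • x + b • y = y := by ext i; simp [← ha', hb1]
      rw [this, ← ha', hb1]; simp
    rcases eq_or_lt_of_le hb with hb' | hb'
    · have ha1 : a = 1 := by linarith
      have : a • x + b • y = x := by ext i; simp [← hb', ha1]
      rw [this, ← hb', ha1]; simp
    -- main case: a, b > 0
    set u : Fin n → ℝ := fun i => (x i)⁻¹ with hu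
    set v : Fin n → ℝ := fun i => (y i)⁻¹ with hv
    have hum : u ∈ {κ : Fin n → ℝ | ∀ i, 0 < κ i} := fun i => inv_pos.mpr (hx i)
    have hvm : v ∈ {κ : Fin n → ℝ | ∀ i, 0 < κ i} := fun i => inv_pos.mpr (hy i)
    set A := f u with hA
    set B := f v with hB
    have hApos : 0 < A := hpos u hum
    have hBpos : 0 < B := hpos v hvm
    set D := a * B + b * A with hD
    have hDpos : 0 < D := by positivity
    set l := a * B / D with hl
    have hl1 : 1 - l = b * A / D := by
      field_simp [hl, hD]
      rw [hl, sub_mul, div_mul_cancel₀ _ hDpos.ne']; linarith [hD]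
    -- coefficients
    have hc1 : 0 < l ^ 2 / a := by
      have : 0 < l := by positivity
      positivity
    have hc2 : 0 < (1 - l) ^ 2 / b := by
      rw [hl1]
      have : 0 < b * A / D := by positivity
      positivity
    set w : Fin n → ℝ := fun i => (l ^ 2 / a) * u i + ((1 - l) ^ 2 / b) * v i with hw
    have hwm : w ∈ {κ : Fin n → ℝ | ∀ i, 0 < κ i} := by
      intro i
      have := hum i; have := hvm i
      have h1 : 0 < (l ^ 2 / a) * u i := mul_pos hc1 (hum i)
      have h2 : 0 < ((1 - l) ^ 2 / b) * v i := mul_pos hc2 (hvm i)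
      simpa [hw] using add_pos h1 h2
    have hinvm : (fun i => ((a • x + b • y) i)⁻¹) ∈ {κ : Fin n → ℝ | ∀ i, 0 < κ i} := by
      intro i
      have : 0 < (a • x + b • y) i := hΓconv hx hy (le_of_lt ha') (le_of_lt hb') hab i
      exact inv_pos.mpr this
    -- pointwise inequality
    have hptwise : ∀ i, ((a • x + b • y) i)⁻¹ ≤ w i := by
      intro i
      have hp : 0 < a * x i := mul_pos ha' (hx i)
      have hq : 0 < b * y i := mul_pos hb' (hy i)
      have := inv_add_le_aux (a * x i) (b * y i) l hp hq
      have heq1 : l ^ 2 / (a * x i) = (l ^ 2 / a) * u i := by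
        rw [hu]; field_simp
      have heq2 : (1 - l) ^ 2 / (b * y i) = ((1 - l) ^ 2 / b) * v i := by
        rw [hv]; field_simp
      simp only [Pi.add_apply, Pi.smul_apply, smul_eq_mul]
      rw [hw]
      calc (a * x i + b * y i)⁻¹ ≤ l ^ 2 / (a * x i) + (1 - l) ^ 2 / (b * y i) := this
        _ = (l ^ 2 / a) * u i + ((1 - l) ^ 2 / b) * v i := by rw [heq1, heq2]
    have step1 : f (fun i => ((a • x + b • y) i)⁻¹) ≤ f w :=
      hmono' _ w hinvm hwm hptwise
    have step2 : f w ≤ (l ^ 2 / a) * A + ((1 - l) ^ 2 / b) * B := by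
      have hw' : w = (l ^ 2 / a) • u + ((1 - l) ^ 2 / b) • v := by
        ext i; simp [hw]
      have hmem1 : (l ^ 2 / a) • u ∈ {κ : Fin n → ℝ | ∀ i, 0 < κ i} := by
        intro i; exact mul_pos hc1 (hum i)
      have hmem2 : ((1 - l) ^ 2 / b) • v ∈ {κ : Fin n → ℝ | ∀ i, 0 < κ i} := by
        intro i; exact mul_pos hc2 (hvm i)
      calc f w = f ((l ^ 2 / a) • u + ((1 - l) ^ 2 / b) • v) := by rw [hw']
        _ ≤ f ((l ^ 2 / a) • u) + f (((1 - l) ^ 2 / b) • v) := hsub _ _ hmem1 hmem2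
        _ = (l ^ 2 / a) * A + ((1 - l) ^ 2 / b) * B := by
            rw [hhom _ hc1 u hum, hhom _ hc2 v hvm]
    have step3 : (l ^ 2 / a) * A + ((1 - l) ^ 2 / b) * B = A * B / D := by
      rw [hl1, hl, hD]
      field_simp
    have hfle : f (fun i => ((a • x + b • y) i)⁻¹) ≤ A * B / D := by
      rw [← step3]; exact le_trans step1 step2
    have hfpos' : 0 < f (fun i => ((a • x + b • y) i)⁻¹) := hpos _ hinvm
    have hfinal : (A * B / D)⁻¹ ≤ (f (fun i => ((a • x + b • y) i)⁻¹))⁻¹ :=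
      inv_anti₀ hfpos' hfle
    have hlhs : a * A⁻¹ + b * B⁻¹ = (A * B / D)⁻¹ := by
      rw [hD]
      field_simp
    calc a * (f u)⁻¹ + b * (f v)⁻¹ = (A * B / D)⁻¹ := hlhs
      _ ≤ (f (fun i => ((a • x + b • y) i)⁻¹))⁻¹ := hfinal
end
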